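/- arXiv:2403.07477 — 3 statements merged into one kernel-verified Lean document; each statement's English description precedes it below -/
import Mathlib

section
/- Let m ≥ 2. If r is a rational root of p_m(n,t) for some n, then r ∈ {-1, 0}. -/
noncomputable def pm (m : ℕ) : ℕ → Polynomial ℤ
  | 0 => 1
  | n + 1 =>
      Polynomial.X * pm m n +
        if h : 2 ≤ m ∧ m ∣ (n + 1) then pm m ((n + 1) / m) else 0
decreasing_by
  · exact Nat.lt_succ_self n
  · exact Nat.div_lt_self (Nat.succ_pos n) (by omega)


open Polynomial

lemma pm_monic (m : ℕ) : ∀ n, (pm m n).Monic ∧ (pm m n).natDegree = n := by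
  intro n
  induction n using Nat.strong_induction_on with
  | _ n ih =>
    match n with
    | 0 => rw [pm]; exact ⟨monic_one, natDegree_one⟩
    | Nat.succ n =>
      rw [pm]
      obtain ⟨hmon, hdeg⟩ := ih n (Nat.lt_succ_self n)
      have hP : (Polynomial.X * pm m n).Monic := monic_X.mul hmon
      have hPdeg : (Polynomial.X * pm m n).natDegree = n + 1 := by
        rw [natDegree_mul X_ne_zero hmon.ne_zero, natDegree_X, hdeg]; omega
      have hlt : ∀ c : Polynomial ℤ, c.natDegree ≤ n →
          c.degree < (Polynomial.X * pm m n).degree := by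
        intro c hc
        rcases eq_or_ne c 0 with rfl | hc0
        · rw [degree_zero]
          exact bot_lt_iff_ne_bot.2 (degree_ne_bot.2 hP.ne_zero)
        · refine lt_of_le_of_lt degree_le_natDegree ?_
          rw [degree_eq_natDegree hP.ne_zero, hPdeg]
          exact_mod_cast Nat.lt_succ_of_le hc
      have hclt : (if h : 2 ≤ m ∧ m ∣ (n + 1) then pm m ((n + 1) / m) else 0).degree
          < (Polynomial.X * pm m n).degree := by
        split
        · rename_i hcond
          refine hlt _ ?_
          have := (ih ((n+1)/m) (Nat.div_lt_self (Nat.succ_pos n) (by omega))).2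
          rw [this]
          have : (n+1)/m < n+1 := Nat.div_lt_self (Nat.succ_pos n) (by omega)
          omega
        · simpa using hlt 0 (by simp)
      constructor
      · exact hP.add_of_left hclt
      · rw [natDegree_add_eq_left_of_degree_lt hclt, hPdeg]

lemma pm_eval_pos (m : ℕ) (k : ℤ) (hk : 1 ≤ k) : ∀ n, 1 ≤ (pm m n).eval k := by
  intro n
  induction n using Nat.strong_induction_on with
  | _ n ih =>
    match n with
    | 0 => rw [pm]; simp
    | Nat.succ n =>
      rw [pm]
      have h1 := ih n (Nat.lt_succ_self n)
      have h2 : 0 ≤ (if h : 2 ≤ m ∧ m ∣ (n + 1) then pm m ((n + 1) / m) else 0).eval k := by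
        split
        · exact le_trans zero_le_one (ih _ (Nat.div_lt_self (Nat.succ_pos n) (by omega)))
        · simp
      simp only [eval_add, eval_mul, eval_X]
      nlinarith

/-- sign-adjusted values at a negative integer -/
noncomputable def sPm (m : ℕ) (a : ℤ) (n : ℕ) : ℤ := (-1)^n * (pm m n).eval (-a)

lemma sPm_mono (m : ℕ) (hm : 2 ≤ m) (a : ℤ) (ha : 2 ≤ a) :
    ∀ n, 1 ≤ sPm m a n ∧ ∀ j ≤ n, sPm m a j ≤ sPm m a n := by
  intro n
  induction n using Nat.strong_induction_on with
  | _ n ih =>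
    match n with
    | 0 =>
      refine ⟨by rw [sPm, pm]; simp, ?_⟩
      intro j hj; interval_cases j; rfl
    | Nat.succ n =>
      obtain ⟨h1, hmono⟩ := ih n (Nat.lt_succ_self n)
      set c : ℤ := (-1)^(n+1) * (if h : 2 ≤ m ∧ m ∣ (n + 1) then pm m ((n + 1) / m) else 0).eval (-a) with hc
      have hrec : sPm m a (n+1) = a * sPm m a n + c := by
        rw [sPm, sPm, pm]
        simp only [eval_add, eval_mul, eval_X, hc]
        ring
      have hkey : sPm m a n ≤ sPm m a (n+1) := by
        rw [hrec]
        rcases em (2 ≤ m ∧ m ∣ (n + 1)) with hcond | hcond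
        · have hq : (n+1)/m < n+1 := Nat.div_lt_self (Nat.succ_pos n) (by omega)
          obtain ⟨hq1, _⟩ := ih ((n+1)/m) hq
          have hqn : sPm m a ((n+1)/m) ≤ sPm m a n := hmono _ (by omega)
          have habs : |c| = sPm m a ((n+1)/m) := by
            rw [hc, sPm]
            rw [dif_pos hcond]
            rw [abs_mul, abs_pow, abs_neg, abs_one, one_pow, one_mul]
            have : |(-1:ℤ)^((n+1)/m) * (pm m ((n+1)/m)).eval (-a)| =
                |(pm m ((n+1)/m)).eval (-a)| := by
              rw [abs_mul, abs_pow, abs_neg, abs_one, one_pow, one_mul]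
            rw [← this]
            exact (abs_of_pos (lt_of_lt_of_le one_pos hq1)).symm ▸ rfl
          have : -sPm m a n ≤ c := by
            have := neg_abs_le c
            rw [habs] at this
            linarith
          nlinarith
        · rw [hc, dif_neg hcond]
          simp only [eval_zero, mul_zero, add_zero]
          nlinarith
      refine ⟨le_trans h1 hkey, ?_⟩
      intro j hj
      rcases Nat.lt_succ_iff_lt_or_eq.1 (Nat.lt_succ_of_le hj) with h | rfl
      · exact le_trans (hmono j (by omega)) hkey
      · rfl

/-- Any rational root of any m-ary partition polynomial is -1 or 0. -/
theorem rational_roots_pm (m : ℕ) (hm : 2 ≤ m) (n : ℕ) (r : ℚ)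
    (h : (Polynomial.aeval r) (pm m n) = 0) : r = -1 ∨ r = 0 := by
  have hint : IsIntegral ℤ r := ⟨pm m n, (pm_monic m n).1, h⟩
  obtain ⟨k, hk⟩ := IsIntegrallyClosed.isIntegral_iff.mp hint
  have hev : (pm m n).eval k = 0 := by
    have h2 := h
    rw [← hk, Polynomial.aeval_algebraMap_apply] at h2
    have : (((pm m n).eval k : ℤ) : ℚ) = 0 := by
      simpa [Polynomial.coe_aeval_eq_eval] using h2
    exact_mod_cast this
  have hk01 : k = -1 ∨ k = 0 := by
    by_contra hcon
    push_neg at hcon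
    rcases le_or_gt 1 k with h1 | h1
    · have := pm_eval_pos m k h1 n
      omega
    · have hk2 : 2 ≤ -k := by omega
      have hs := (sPm_mono m hm (-k) hk2 n).1
      rw [sPm, neg_neg, hev, mul_zero] at hs
      omega
  rcases hk01 with rfl | rfl
  · left; rw [← hk]; norm_num
  · right; rw [← hk]; norm_num
end

section
/- Let m ≥ 2 and let ε ∈ (0,1). If t ∈ ℂ satisfies |t| > max{ε^{-1/(m-1)}, (ε(1-ε))^{-1/m}}, then for every n ≥ 1, |p_m(n,t) - t·p_m(n-1,t)| < ε·|t·p_m(n-1,t)|. -/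
lemma pm_zero (m : ℕ) : pm m 0 = 1 := by rw [pm]

lemma pm_eval_succ (m : ℕ) (hm : 2 ≤ m) (t : ℂ) (j : ℕ) :
    (Polynomial.aeval t) (pm m (j + 1)) =
      t * (Polynomial.aeval t) (pm m j) +
        (if m ∣ (j + 1) then (Polynomial.aeval t) (pm m ((j + 1) / m)) else 0) := by
  rw [pm]
  by_cases h : m ∣ (j + 1)
  · rw [dif_pos ⟨hm, h⟩, if_pos h, map_add, map_mul, Polynomial.aeval_X]
  · rw [dif_neg (by tauto), if_neg h, add_zero, add_zero, map_mul, Polynomial.aeval_X]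

lemma nat_div_lem (m k j : ℕ) (hm : 2 ≤ m) (hk : 1 ≤ k) (hj : j + 1 = m * k) :
    j / m = k - 1 := by
  obtain ⟨k', rfl⟩ : ∃ k', k = k' + 1 := ⟨k - 1, by omega⟩
  have h1 : m * (k' + 1) = m * k' + m := Nat.mul_succ m k'
  have h2 : m * k' = k' * m := Nat.mul_comm _ _
  have hj' : j = (m - 1) + k' * m := by omega
  rw [hj', Nat.add_mul_div_right _ _ (by omega : 0 < m), Nat.div_eq_of_lt (by omega)]
  omega

lemma nat_exp_lem (m k j : ℕ) (hm : 2 ≤ m) (hk : 1 ≤ k) (hj : j + 1 = m * k) :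
    (j - k) + 1 = k * (m - 1) := by
  have h1 : k * (m - 1) + k = k * m := by
    obtain ⟨m', rfl⟩ : ∃ m', m = m' + 1 := ⟨m - 1, by omega⟩
    simp [Nat.mul_succ]
  have h2 : k * m = m * k := Nat.mul_comm _ _
  have h3 : 2 * k ≤ m * k := Nat.mul_le_mul_right k hm
  omega

lemma key_nat (m k : ℕ) (hm : 2 ≤ m) (hk : 1 ≤ k) :
    (k - 1 - k / m) * m ≤ k * (m - 1) := by
  have h1 : m * (k / m) + k % m = k := Nat.div_add_mod k m
  have h2 : k % m < m := Nat.mod_lt _ (by omega)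
  have h3 : (k - 1 - k / m) * m = (k - 1) * m - (k / m) * m := Nat.sub_mul _ _ _
  have h4 : (k - 1) * m = k * m - m := by rw [Nat.sub_mul, one_mul]
  have h5 : k * (m - 1) + k = k * m := by
    obtain ⟨m', rfl⟩ : ∃ m', m = m' + 1 := ⟨m - 1, by omega⟩
    simp [Nat.mul_succ]
  have h6 : m * (k / m) = (k / m) * m := Nat.mul_comm _ _
  rw [h3, h4]
  omega

lemma key_ineq (m : ℕ) (hm : 2 ≤ m) (ε r : ℝ) (hε0 : 0 < ε) (hε1 : ε < 1)
    (hr1 : 1 < r) (h1 : 1 < ε * r ^ (m - 1)) (h2 : 1 < ε * ((1 - ε) * r ^ m))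
    (k : ℕ) (hk : 1 ≤ k) :
    1 < ε * ((1 - ε) ^ (k - 1 - k / m) * r ^ (k * (m - 1))) := by
  have hr0 : (0 : ℝ) < r := lt_trans one_pos hr1
  have hε1' : (0 : ℝ) < 1 - ε := by linarith
  set c := k - 1 - k / m with hc
  have hmono : r ^ (m - 1) ≤ r ^ (k * (m - 1)) :=
    pow_le_pow_right₀ hr1.le (Nat.le_mul_of_pos_left _ hk)
  rcases Nat.eq_zero_or_pos c with h0 | hcpos
  · rw [h0, pow_zero, one_mul]
    calc (1 : ℝ) < ε * r ^ (m - 1) := h1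
      _ ≤ ε * r ^ (k * (m - 1)) := by gcongr
  · have hcm : c * m ≤ k * (m - 1) := key_nat m k hm hk
    have hprod : (0 : ℝ) < ε * (1 - ε) := mul_pos hε0 hε1'
    have hrm : 1 / (ε * (1 - ε)) < r ^ m := by
      rw [div_lt_iff₀ hprod]
      calc (1 : ℝ) < ε * ((1 - ε) * r ^ m) := h2
        _ = r ^ m * (ε * (1 - ε)) := by ring
    have hpowc : (1 / (ε * (1 - ε))) ^ c < (r ^ m) ^ c :=
      pow_lt_pow_left₀ hrm (by positivity) (by omega)
    have hmono2 : (r ^ m) ^ c ≤ r ^ (k * (m - 1)) := by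
      rw [← pow_mul]
      exact pow_le_pow_right₀ hr1.le (le_trans (le_of_eq (Nat.mul_comm m c)) hcm)
    have e : ε * ((1 - ε) ^ c * (1 / (ε * (1 - ε))) ^ c) = ε / ε ^ c := by
      rw [div_pow, one_pow, mul_pow]
      field_simp
    have hge : 1 ≤ ε / ε ^ c := by
      rw [le_div_iff₀ (pow_pos hε0 c), one_mul]
      calc ε ^ c ≤ ε ^ 1 := pow_le_pow_of_le_one hε0.le hε1.le hcpos
        _ = ε := pow_one ε
    calc (1 : ℝ) ≤ ε / ε ^ c := hge
      _ = ε * ((1 - ε) ^ c * (1 / (ε * (1 - ε))) ^ c) := e.symm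
      _ < ε * ((1 - ε) ^ c * (r ^ m) ^ c) := by gcongr
      _ ≤ ε * ((1 - ε) ^ c * r ^ (k * (m - 1))) := by gcongr

lemma growth (m : ℕ) (ε r : ℝ) (hε0 : 0 ≤ ε) (hε1 : ε ≤ 1) (hr0 : 0 ≤ r)
    (Q : ℕ → ℝ) (hQ : ∀ j, 0 ≤ Q j) (N : ℕ)
    (hd : ∀ j, j < N → m ∣ (j + 1) → (1 - ε) * (r * Q j) ≤ Q (j + 1))
    (hnd : ∀ j, j < N → ¬ m ∣ (j + 1) → Q (j + 1) = r * Q j) :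
    ∀ b, b ≤ N → ∀ a, a ≤ b → r ^ (b - a) * ((1 - ε) ^ (b / m - a / m) * Q a) ≤ Q b := by
  have hε' : (0 : ℝ) ≤ 1 - ε := by linarith
  intro b
  induction b with
  | zero =>
    intro _ a ha
    obtain rfl : a = 0 := Nat.le_zero.mp ha
    simp
  | succ b ih =>
    intro hbN a ha
    rcases Nat.eq_or_lt_of_le ha with rfl | hab
    · simp
    · have hab' : a ≤ b := by omega
      have hih := ih (by omega) a hab'
      have hdiv_le : a / m ≤ b / m := Nat.div_le_div_right hab'
      have hsub : b + 1 - a = (b - a) + 1 := by omega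
      by_cases hdv : m ∣ (b + 1)
      · have hdd : (b + 1) / m = b / m + 1 := by rw [Nat.succ_div, if_pos hdv]
        have hstep := hd b (by omega) hdv
        calc r ^ (b + 1 - a) * ((1 - ε) ^ ((b + 1) / m - a / m) * Q a)
            = (1 - ε) * (r * (r ^ (b - a) * ((1 - ε) ^ (b / m - a / m) * Q a))) := by
              rw [hsub, hdd]
              have h9 : b / m + 1 - a / m = (b / m - a / m) + 1 := by omega
              rw [h9, pow_succ, pow_succ]
              ring
          _ ≤ (1 - ε) * (r * Q b) := by
              have := mul_le_mul_of_nonneg_left hih hr0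
              exact mul_le_mul_of_nonneg_left this hε'
          _ ≤ Q (b + 1) := hstep
      · have hdd : (b + 1) / m = b / m := by
          rw [Nat.succ_div, if_neg hdv, add_zero]
        have heq := hnd b (by omega) hdv
        calc r ^ (b + 1 - a) * ((1 - ε) ^ ((b + 1) / m - a / m) * Q a)
            = r * (r ^ (b - a) * ((1 - ε) ^ (b / m - a / m) * Q a)) := by
              rw [hsub, hdd, pow_succ]
              ring
          _ ≤ r * Q b := mul_le_mul_of_nonneg_left hih hr0
          _ = Q (b + 1) := heq.symm

lemma lower_step (ε : ℝ) (t x y : ℂ)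
    (h : ‖y - t * x‖ < ε * ‖t * x‖) :
    (1 - ε) * (‖t‖ * ‖x‖) ≤ ‖y‖ := by
  have habs := norm_add_le (t * x - y) y
  have e : t * x - y + y = t * x := by ring
  rw [e, norm_sub_rev] at habs
  rw [norm_mul] at h habs
  linarith

lemma pm_main (m : ℕ) (hm : 2 ≤ m) (ε : ℝ) (hε0 : 0 < ε) (hε1 : ε < 1) (t : ℂ)
    (hr1 : 1 < ‖t‖)
    (h1 : 1 < ε * ‖t‖ ^ (m - 1))
    (h2 : 1 < ε * ((1 - ε) * ‖t‖ ^ m)) :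
    ∀ N, (1 ≤ N →
      ‖(Polynomial.aeval t) (pm m N) - t * (Polynomial.aeval t) (pm m (N - 1))‖ <
        ε * ‖t * (Polynomial.aeval t) (pm m (N - 1))‖) ∧
      0 < ‖(Polynomial.aeval t) (pm m N)‖ := by
  have hε1' : (0 : ℝ) < 1 - ε := by linarith
  have hr0 : (0 : ℝ) < ‖t‖ := lt_trans one_pos hr1
  intro N
  induction N using Nat.strong_induction_on with
  | _ N IH =>
  match N with
  | 0 =>
    refine ⟨fun h => by omega, ?_⟩
    rw [pm_zero, map_one, norm_one]
    exact one_pos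
  | (j + 1) =>
    have hS : ‖(Polynomial.aeval t) (pm m (j + 1)) -
        t * (Polynomial.aeval t) (pm m j)‖ <
        ε * ‖t * (Polynomial.aeval t) (pm m j)‖ := by
      have hPjpos : 0 < ‖(Polynomial.aeval t) (pm m j)‖ :=
        (IH j (by omega)).2
      have hRHSpos : 0 < ε * ‖t * (Polynomial.aeval t) (pm m j)‖ := by
        rw [norm_mul]
        exact mul_pos hε0 (mul_pos hr0 hPjpos)
      by_cases hdvd : m ∣ (j + 1)
      · obtain ⟨k, hmk⟩ := id hdvd
        have hk1 : 1 ≤ k := by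
          rcases Nat.eq_zero_or_pos k with rfl | h
          · rw [Nat.mul_zero] at hmk; omega
          · exact h
        have h2k : 2 * k ≤ j + 1 := by
          rw [hmk]; exact Nat.mul_le_mul_right k hm
        have hkj : k ≤ j := by omega
        have hdivk : (j + 1) / m = k := by
          rw [hmk]; exact Nat.mul_div_cancel_left k (by omega)
        have hPj1 : (Polynomial.aeval t) (pm m (j + 1)) =
            t * (Polynomial.aeval t) (pm m j) + (Polynomial.aeval t) (pm m k) := by
          rw [pm_eval_succ m hm t j, if_pos hdvd, hdivk]
        -- growth hypotheses
        have hd : ∀ i, i < j → m ∣ (i + 1) →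
            (1 - ε) * (‖t‖ * ‖(Polynomial.aeval t) (pm m i)‖) ≤
              ‖(Polynomial.aeval t) (pm m (i + 1))‖ := by
          intro i hij hdv
          have hSi := (IH (i + 1) (by omega)).1 (by omega)
          simp only [Nat.add_sub_cancel] at hSi
          exact lower_step ε t _ _ hSi
        have hnd : ∀ i, i < j → ¬ m ∣ (i + 1) →
            ‖(Polynomial.aeval t) (pm m (i + 1))‖ =
              ‖t‖ * ‖(Polynomial.aeval t) (pm m i)‖ := by
          intro i hij hdv
          rw [pm_eval_succ m hm t i, if_neg hdv, add_zero, norm_mul]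
        have hgrow := growth m ε (‖t‖) hε0.le hε1.le hr0.le
          (fun i => ‖(Polynomial.aeval t) (pm m i)‖)
          (fun i => norm_nonneg _) j hd hnd j le_rfl k hkj
        have hQk : 0 < ‖(Polynomial.aeval t) (pm m k)‖ := (IH k (by omega)).2
        have e1 : j / m = k - 1 := nat_div_lem m k j hm hk1 hmk
        have e2 : (j - k) + 1 = k * (m - 1) := nat_exp_lem m k j hm hk1 hmk
        have hkey := key_ineq m hm ε (‖t‖) hε0 hε1 hr1 h1 h2 k hk1
        have hgoal : ‖(Polynomial.aeval t) (pm m k)‖ <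
            ε * ‖t * (Polynomial.aeval t) (pm m j)‖ := by
          rw [norm_mul]
          calc ‖(Polynomial.aeval t) (pm m k)‖
              = 1 * ‖(Polynomial.aeval t) (pm m k)‖ := (one_mul _).symm
            _ < (ε * ((1 - ε) ^ (k - 1 - k / m) * ‖t‖ ^ (k * (m - 1)))) *
                  ‖(Polynomial.aeval t) (pm m k)‖ :=
                mul_lt_mul_of_pos_right hkey hQk
            _ = ε * (‖t‖ * (‖t‖ ^ (j - k) *
                  ((1 - ε) ^ (j / m - k / m) * ‖(Polynomial.aeval t) (pm m k)‖))) := by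
                rw [e1, ← e2, pow_succ]
                ring
            _ ≤ ε * (‖t‖ * ‖(Polynomial.aeval t) (pm m j)‖) := by
                have := mul_le_mul_of_nonneg_left hgrow hr0.le
                exact mul_le_mul_of_nonneg_left this hε0.le
        rw [hPj1, add_sub_cancel_left]
        exact hgoal
      · rw [pm_eval_succ m hm t j, if_neg hdvd, add_zero, sub_self, norm_zero]
        exact hRHSpos
    have hpos : 0 < ‖(Polynomial.aeval t) (pm m (j + 1))‖ := by
      have hlow := lower_step ε t _ _ hS
      have hPjpos : 0 < ‖(Polynomial.aeval t) (pm m j)‖ := (IH j (by omega)).2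
      have h0 : 0 < (1 - ε) * (‖t‖ * ‖(Polynomial.aeval t) (pm m j)‖) :=
        mul_pos hε1' (mul_pos hr0 hPjpos)
      linarith
    exact ⟨fun _ => by simpa using hS, hpos⟩

/-- Lemma on the smallness of p_m(n,t) - t·p_m(n-1,t) for |t| large. -/
theorem pm_diff_small (m : ℕ) (hm : 2 ≤ m) (ε : ℝ) (hε : ε ∈ Set.Ioo (0 : ℝ) 1)
    (t : ℂ) (ht : ‖t‖ >
      max (ε ^ (-(1 : ℝ) / ((m : ℝ) - 1))) ((ε * (1 - ε)) ^ (-(1 : ℝ) / (m : ℝ))))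
    (n : ℕ) (hn : 1 ≤ n) :
    ‖(Polynomial.aeval t) (pm m n) - t * (Polynomial.aeval t) (pm m (n - 1))‖ <
      ε * ‖t * (Polynomial.aeval t) (pm m (n - 1))‖ := by
  obtain ⟨hε0, hε1⟩ := hε
  have hε1' : (0 : ℝ) < 1 - ε := by linarith
  have hμ : (2 : ℝ) ≤ (m : ℝ) := by exact_mod_cast hm
  have hm1pos : (0 : ℝ) < (m : ℝ) - 1 := by linarith
  have hmpos : (0 : ℝ) < (m : ℝ) := by linarith
  have hr0 : (0 : ℝ) ≤ ‖t‖ := norm_nonneg _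
  have ht1 : ε ^ (-(1 : ℝ) / ((m : ℝ) - 1)) < ‖t‖ :=
    (le_max_left _ _).trans_lt ht
  have ht2 : (ε * (1 - ε)) ^ (-(1 : ℝ) / (m : ℝ)) < ‖t‖ :=
    (le_max_right _ _).trans_lt ht
  -- first inequality
  have hinv1 : ε⁻¹ < ‖t‖ ^ (m - 1) := by
    have h := Real.rpow_lt_rpow (Real.rpow_nonneg hε0.le _) ht1 hm1pos
    have hcast : ((m - 1 : ℕ) : ℝ) = (m : ℝ) - 1 := by
      rw [Nat.cast_sub (by omega)]; simp
    have hL : (ε ^ (-(1 : ℝ) / ((m : ℝ) - 1))) ^ ((m : ℝ) - 1) = ε⁻¹ := by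
      rw [← Real.rpow_mul hε0.le, div_mul_cancel₀ _ (ne_of_gt hm1pos)]
      rw [Real.rpow_neg hε0.le, Real.rpow_one]
    rw [hL] at h
    calc ε⁻¹ < ‖t‖ ^ ((m : ℝ) - 1) := h
      _ = ‖t‖ ^ (((m - 1 : ℕ) : ℝ)) := by rw [hcast]
      _ = ‖t‖ ^ (m - 1) := Real.rpow_natCast _ _
  have h1 : 1 < ε * ‖t‖ ^ (m - 1) := by
    have := (mul_lt_mul_iff_right₀ hε0).2 hinv1
    rwa [mul_inv_cancel₀ (ne_of_gt hε0)] at this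
  -- second inequality
  have hprod : (0 : ℝ) < ε * (1 - ε) := mul_pos hε0 hε1'
  have hinv2 : (ε * (1 - ε))⁻¹ < ‖t‖ ^ m := by
    have h := Real.rpow_lt_rpow (Real.rpow_nonneg hprod.le _) ht2 hmpos
    have hL : ((ε * (1 - ε)) ^ (-(1 : ℝ) / (m : ℝ))) ^ (m : ℝ) = (ε * (1 - ε))⁻¹ := by
      rw [← Real.rpow_mul hprod.le, div_mul_cancel₀ _ (ne_of_gt hmpos)]
      rw [Real.rpow_neg hprod.le, Real.rpow_one]
    rw [hL] at h
    calc (ε * (1 - ε))⁻¹ < ‖t‖ ^ (m : ℝ) := h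
      _ = ‖t‖ ^ (((m : ℕ) : ℝ)) := by norm_num
      _ = ‖t‖ ^ m := Real.rpow_natCast _ _
  have h2 : 1 < ε * ((1 - ε) * ‖t‖ ^ m) := by
    have := (mul_lt_mul_iff_right₀ hprod).2 hinv2
    rw [mul_inv_cancel₀ (ne_of_gt hprod)] at this
    calc (1 : ℝ) < ε * (1 - ε) * ‖t‖ ^ m := this
      _ = ε * ((1 - ε) * ‖t‖ ^ m) := by ring
  -- |t| > 1
  have hr1 : 1 < ‖t‖ := by
    by_contra hcon
    push_neg at hcon
    have hp : ‖t‖ ^ (m - 1) ≤ 1 := pow_le_one₀ hr0 hcon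
    have : (1 : ℝ) < ε⁻¹ := one_lt_inv₀ hε0 |>.mpr hε1
    linarith
  exact (pm_main m hm ε hε0 hε1 t hr1 h1 h2 n).1 hn
end

section
/- Let M = (m_i) with m_0=1, m_i ≥ 2, and let n = a_0 + a_1 M_1 + ⋯ + a_k M_k be the M-ary representation of n (a_j ∈ {0,…,m_{j+1}-1}). Let f(a,t) := (t^a - 1)/(t-1) and g_k(t) := gcd(t^{m_1+m_2-1} f(m_2, t^{m_1-1}), …, t^{m_k+m_{k+1}-1} f(m_{k+1}, t^{m_k-1})). Then p_M(n,t) ≡ t^{a_0} ∏_{j=1}^{k} t^{a_j} f(a_j + 1, t^{m_j - 1}) (mod g_k(t)). -/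
def shiftSeq (m : ℕ → ℕ) : ℕ → ℕ := fun i => if i = 0 then 1 else m (i + 1)

noncomputable def pM : (ℕ → ℕ) → ℕ → Polynomial ℤ
  | _, 0 => 1
  | m, n + 1 =>
      Polynomial.X * pM m n +
        if h : 2 ≤ m 1 ∧ m 1 ∣ (n + 1) then pM (shiftSeq m) ((n + 1) / m 1) else 0
termination_by m n => n
decreasing_by
  · exact Nat.lt_succ_self n
  · exact Nat.div_lt_self (Nat.succ_pos n) (by omega)

/-- f(a, t^e) = 1 + t^e + t^(2e) + ⋯ + t^((a-1)e), i.e. f(a,s) = (s^a-1)/(s-1) at s = t^e. -/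
noncomputable def fpow (a e : ℕ) : Polynomial ℤ :=
  ∑ i ∈ Finset.range a, Polynomial.X ^ (e * i)

/-- f over ℚ. -/
noncomputable def fpowQ (a e : ℕ) : Polynomial ℚ :=
  ∑ i ∈ Finset.range a, Polynomial.X ^ (e * i)

open Polynomial Finset

lemma pM_zero (m : ℕ → ℕ) : pM m 0 = 1 := by rw [pM]

lemma pM_succ (m : ℕ → ℕ) (n : ℕ) : pM m (n+1) = X * pM m n +
    if 2 ≤ m 1 ∧ m 1 ∣ (n + 1) then pM (shiftSeq m) ((n + 1) / m 1) else 0 := by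
  rw [pM]
  congr 1

lemma pM_add_lt (m : ℕ → ℕ) (h1 : 2 ≤ m 1) (q : ℕ) :
    ∀ r, r < m 1 → pM m (m 1 * q + r) = X ^ r * pM m (m 1 * q) := by
  intro r
  induction r with
  | zero => simp
  | succ r ih =>
    intro hr
    have hstep : pM m (m 1 * q + r + 1) = X * pM m (m 1 * q + r) := by
      rw [pM_succ, if_neg, add_zero]
      rintro ⟨-, hd⟩
      have h2 : m 1 ∣ r + 1 := by
        have := (Nat.dvd_add_right (Dvd.intro q rfl)).mp (by rwa [add_assoc] at hd)
        exact this
      have := Nat.le_of_dvd (Nat.succ_pos r) h2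
      omega
    have : m 1 * q + (r + 1) = m 1 * q + r + 1 := by omega
    rw [this, hstep, ih (by omega), ← mul_assoc, ← pow_succ']

lemma pM_mul_succ (m : ℕ → ℕ) (h1 : 2 ≤ m 1) (q : ℕ) :
    pM m (m 1 * (q+1)) = X ^ (m 1) * pM m (m 1 * q) + pM (shiftSeq m) (q+1) := by
  have h : m 1 * (q+1) = (m 1 * q + (m 1 - 1)) + 1 := by
    have : m 1 * (q+1) = m 1 * q + m 1 := by ring
    omega
  have hdvd : m 1 ∣ m 1 * q + (m 1 - 1) + 1 := by rw [← h]; exact Dvd.intro (q+1) rfl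
  have hdiv : (m 1 * q + (m 1 - 1) + 1) / m 1 = q + 1 := by
    rw [← h]; exact Nat.mul_div_cancel_left _ (by omega)
  rw [h, pM_succ, if_pos ⟨h1, hdvd⟩, hdiv, pM_add_lt m h1 q (m 1 - 1) (by omega),
    ← mul_assoc, ← pow_succ']
  have : m 1 - 1 + 1 = m 1 := by omega
  rw [this]

lemma fpow_succ (a e : ℕ) : fpow (a+1) e = 1 + X ^ e * fpow a e := by
  unfold fpow
  rw [Finset.sum_range_succ', Finset.mul_sum]
  simp only [mul_zero, pow_zero]
  rw [add_comm]
  congr 1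
  apply Finset.sum_congr rfl
  intro i _
  rw [← pow_add]
  congr 1
  ring

lemma shiftSeq_one (m : ℕ → ℕ) : shiftSeq m 1 = m 2 := rfl

lemma claimB (m : ℕ → ℕ) (h1 : 2 ≤ m 1) (h2 : 2 ≤ m 2) (N : ℕ) :
    (X ^ (m 1 + m 2 - 1) * fpow (m 2) (m 1 - 1) : Polynomial ℤ) ∣
      pM m (m 1 * N) - X ^ (N % m 2) * fpow (N % m 2 + 1) (m 1 - 1) *
        pM (shiftSeq m) (N - N % m 2) := by
  induction N with
  | zero =>
    simp [pM_zero, fpow, Finset.sum_range_succ]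
  | succ N ih =>
    set s := m 1 - 1 with hs
    set r := N % m 2 with hrdef
    have hrlt : r < m 2 := Nat.mod_lt _ (by omega)
    have hNdm : m 2 * (N / m 2) + r = N := Nat.div_add_mod N (m 2)
    obtain ⟨c, hc⟩ := ih
    rw [pM_mul_succ m h1 N]
    rcases Nat.lt_or_ge (r + 1) (m 2) with hr | hr
    · -- (N+1) % m 2 = r + 1
      have hmod : (N+1) % m 2 = r + 1 := by
        rw [Nat.add_mod, ← hrdef, Nat.mod_eq_of_lt (show 1 < m 2 by omega),
          Nat.mod_eq_of_lt hr]
      have hsub : N + 1 - (r + 1) = N - r := by omega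
      have hNsucc : N + 1 = m 2 * (N / m 2) + (r + 1) := by omega
      have hNr : N - r = m 2 * (N / m 2) := by omega
      have hPM' : pM (shiftSeq m) (N + 1) = X ^ (r+1) * pM (shiftSeq m) (N - r) := by
        rw [hNsucc, hNr]
        exact pM_add_lt (shiftSeq m) (by rw [shiftSeq_one]; exact h2) _ _
          (by rw [shiftSeq_one]; exact hr)
      rw [hmod, hsub, hPM']
      have key : (X:Polynomial ℤ) ^ (r+1) * fpow (r+1+1) s =
          X ^ (r+1) + X ^ (m 1 + r) * fpow (r+1) s := by
        rw [fpow_succ, mul_add, mul_one, ← mul_assoc, ← pow_add]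
        congr 3
        omega
      use X ^ (m 1) * c
      calc X ^ (m 1) * pM m (m 1 * N) + X ^ (r + 1) * pM (shiftSeq m) (N - r) -
            X ^ (r + 1) * fpow (r + 1 + 1) s * pM (shiftSeq m) (N - r)
          = X ^ (m 1) * (pM m (m 1 * N) - X ^ r * fpow (r + 1) s * pM (shiftSeq m) (N - r)) +
            (X ^ (r+1) + X ^ (m 1) * X ^ r * fpow (r+1) s
              - X ^ (r+1) * fpow (r+1+1) s) * pM (shiftSeq m) (N - r) := by ring
        _ = X ^ (m 1 + m 2 - 1) * fpow (m 2) s * (X ^ (m 1) * c) := by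
            rw [hc, key, ← pow_add]
            ring
    · -- r + 1 = m 2, so (N+1) % m 2 = 0
      have hr' : r + 1 = m 2 := by omega
      have hmod : (N+1) % m 2 = 0 := by
        have : N + 1 = m 2 * (N / m 2 + 1) := by
          rw [Nat.mul_add, mul_one]; omega
        rw [this, Nat.mul_mod_right]
      rw [hmod]
      simp only [Nat.sub_zero, pow_zero, one_mul]
      have hfone : fpow (0+1) s = 1 := by simp [fpow]
      rw [hfone, one_mul]
      use X ^ (m 1) * c + pM (shiftSeq m) (N - r)
      have hexp : (X:Polynomial ℤ) ^ (m 1) * X ^ r = X ^ (m 1 + m 2 - 1) := by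
        rw [← pow_add]; congr 1; omega
      calc X ^ (m 1) * pM m (m 1 * N) + pM (shiftSeq m) (N + 1) - pM (shiftSeq m) (N + 1)
          = X ^ (m 1) * (pM m (m 1 * N) - X ^ r * fpow (r+1) s * pM (shiftSeq m) (N - r)) +
            (X ^ (m 1) * X ^ r) * fpow (r+1) s * pM (shiftSeq m) (N - r) := by ring
        _ = _ := by
            rw [hc, hexp, hr']
            ring

lemma fpow_map (a e : ℕ) : (fpow a e).map (Int.castRingHom ℚ) = fpowQ a e := by
  simp [fpow, fpowQ, Polynomial.map_sum]

lemma main_aux : ∀ (k : ℕ) (m : ℕ → ℕ), m 0 = 1 → (∀ i ≥ 1, 2 ≤ m i) →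
    ∀ (n : ℕ) (a : ℕ → ℕ), (∀ j ≤ k, a j < m (j + 1)) →
    n = ∑ j ∈ Finset.range (k + 1), a j * ∏ i ∈ Finset.range (j + 1), m i →
    (Finset.Icc 1 k).gcd
        (fun j => Polynomial.X ^ (m j + m (j + 1) - 1) * fpowQ (m (j + 1)) (m j - 1)) ∣
      ((pM m n).map (Int.castRingHom ℚ) -
        Polynomial.X ^ (a 0) *
          ∏ j ∈ Finset.Icc 1 k, Polynomial.X ^ (a j) * fpowQ (a j + 1) (m j - 1)) := by
  intro k
  induction k with
  | zero =>
    intro m h0 hm n a ha hn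
    have hna : n = a 0 := by
      simpa [h0] using hn
    have hIcc : Finset.Icc 1 0 = (∅ : Finset ℕ) := by simp
    rw [hIcc]
    simp only [Finset.gcd_empty, Finset.prod_empty, mul_one, zero_dvd_iff, sub_eq_zero]
    have h1 : 2 ≤ m 1 := hm 1 le_rfl
    have := pM_add_lt m h1 0 (a 0) (ha 0 le_rfl)
    rw [mul_zero, zero_add] at this
    rw [hna, this, pM_zero, mul_one, Polynomial.map_pow, Polynomial.map_X]
  | succ k IH =>
    intro m h0 hm n a ha hn
    have h1 : 2 ≤ m 1 := hm 1 le_rfl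
    have h2 : 2 ≤ m 2 := hm 2 (by omega)
    set m' := shiftSeq m with hm'def
    have hm'0 : m' 0 = 1 := rfl
    have hm'i : ∀ i ≥ 1, 2 ≤ m' i := by
      intro i hi
      show 2 ≤ shiftSeq m i
      unfold shiftSeq
      rw [if_neg (by omega)]
      exact hm (i+1) (by omega)
    have hm'eq : ∀ i, 1 ≤ i → m' i = m (i+1) := by
      intro i hi
      show shiftSeq m i = m (i+1)
      unfold shiftSeq
      rw [if_neg (by omega)]
    have hprod : ∀ j, m 1 * ∏ i ∈ Finset.range (j+1), m' i
        = ∏ i ∈ Finset.range (j+1+1), m i := by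
      intro j
      induction j with
      | zero => simp [Finset.prod_range_succ, Finset.prod_range_one, hm'0, h0]
      | succ j ihj =>
        rw [Finset.prod_range_succ, ← mul_assoc, ihj, hm'eq (j+1) (by omega),
          ← Finset.prod_range_succ]
    set n' := ∑ j ∈ Finset.range (k+1), a (j+1) * ∏ i ∈ Finset.range (j+1), m' i
      with hn'def
    have hbig : ∑ j ∈ Finset.range (k+1), a (j+1) * ∏ i ∈ Finset.range (j+1+1), m i
        = m 1 * n' := by
      rw [hn'def, Finset.mul_sum]
      apply Finset.sum_congr rfl
      intro j _
      rw [← hprod j]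
      ring
    have hnn' : n = m 1 * n' + a 0 := by
      rw [hn, Finset.sum_range_succ', hbig]
      simp [h0]
    have hdvd2 : ∀ j : ℕ, m 2 ∣ ∏ i ∈ Finset.range (j+1+1), m' i := by
      intro j
      have h1mem : 1 ∈ Finset.range (j+1+1) := by simp
      have := Finset.dvd_prod_of_mem m' h1mem
      rwa [hm'eq 1 le_rfl] at this
    have htail : m 2 ∣ ∑ j ∈ Finset.range k, a (j+1+1) * ∏ i ∈ Finset.range (j+1+1), m' i :=
      Finset.dvd_sum (fun j _ => Dvd.dvd.mul_left (hdvd2 j) _)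
    have hn'split : n' = a 1 + ∑ j ∈ Finset.range k, a (j+1+1) * ∏ i ∈ Finset.range (j+1+1), m' i := by
      rw [hn'def, Finset.sum_range_succ']
      simp [hm'0]
      omega
    obtain ⟨c2, hc2⟩ := htail
    have ha1 : a 1 < m 2 := ha 1 (by omega)
    have hmodn' : n' % m 2 = a 1 := by
      rw [hn'split, hc2, Nat.add_mul_mod_self_left, Nat.mod_eq_of_lt ha1]
    have hcongrsum : ∑ j ∈ Finset.range (k+1), (if j = 0 then 0 else a (j+1)) * ∏ i ∈ Finset.range (j+1), m' i
        = ∑ j ∈ Finset.range k, a (j+1+1) * ∏ i ∈ Finset.range (j+1+1), m' i := by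
      rw [Finset.sum_range_succ']
      simp
    have hsubrep : n' - a 1 = ∑ j ∈ Finset.range (k+1),
        (if j = 0 then 0 else a (j+1)) * ∏ i ∈ Finset.range (j+1), m' i := by
      rw [hcongrsum, hn'split]
      simp
    have ha'' : ∀ j ≤ k, (if j = 0 then 0 else a (j+1)) < m' (j+1) := by
      intro j hj
      by_cases hj0 : j = 0
      · rw [if_pos hj0, hj0, hm'eq 1 le_rfl]
        have := hm (1+1) (by omega)
        omega
      · rw [if_neg hj0, hm'eq (j+1) (by omega)]
        exact ha (j+1) (by omega)
    have hIH := IH m' hm'0 hm'i (n' - a 1) (fun j => if j = 0 then 0 else a (j+1)) ha'' hsubrep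
    simp only [eq_self_iff_true, if_true, if_pos, pow_zero, one_mul] at hIH
    have hprodIH : ∏ j ∈ Finset.Icc 1 k,
          (X:Polynomial ℚ) ^ (if j = 0 then 0 else a (j+1)) *
            fpowQ ((if j = 0 then 0 else a (j+1)) + 1) (m' j - 1)
        = ∏ j ∈ Finset.Icc 1 k,
          (X:Polynomial ℚ) ^ (a (j+1)) * fpowQ (a (j+1) + 1) (m (j+1) - 1) := by
      apply Finset.prod_congr rfl
      intro j hj
      rw [Finset.mem_Icc] at hj
      rw [if_neg (by omega), hm'eq j hj.1]
    rw [hprodIH] at hIH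
    have hG1 : (Finset.Icc 1 (k+1)).gcd
        (fun j => (X:Polynomial ℚ) ^ (m j + m (j + 1) - 1) * fpowQ (m (j + 1)) (m j - 1)) ∣
        (X:Polynomial ℚ) ^ (m 1 + m 2 - 1) * fpowQ (m 2) (m 1 - 1) := by
      have h1mem : (1:ℕ) ∈ Finset.Icc 1 (k+1) := by simp
      simpa using Finset.gcd_dvd h1mem
    have hGg' : (Finset.Icc 1 (k+1)).gcd
        (fun j => (X:Polynomial ℚ) ^ (m j + m (j + 1) - 1) * fpowQ (m (j + 1)) (m j - 1)) ∣
        (Finset.Icc 1 k).gcd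
        (fun j => (X:Polynomial ℚ) ^ (m' j + m' (j + 1) - 1) * fpowQ (m' (j + 1)) (m' j - 1)) := by
      apply Finset.dvd_gcd
      intro j hj
      rw [Finset.mem_Icc] at hj
      have hmem : j + 1 ∈ Finset.Icc 1 (k+1) := by rw [Finset.mem_Icc]; omega
      have := Finset.gcd_dvd (f := fun j => (X:Polynomial ℚ) ^ (m j + m (j + 1) - 1) *
        fpowQ (m (j + 1)) (m j - 1)) hmem
      beta_reduce at this ⊢
      rw [hm'eq j hj.1, hm'eq (j+1) (by omega)]
      exact this
    have hBZ := claimB m h1 h2 n'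
    rw [hmodn'] at hBZ
    have hB : ((X:Polynomial ℚ) ^ (m 1 + m 2 - 1) * fpowQ (m 2) (m 1 - 1)) ∣
        ((pM m (m 1 * n')).map (Int.castRingHom ℚ) -
          X ^ (a 1) * fpowQ (a 1 + 1) (m 1 - 1) *
            (pM m' (n' - a 1)).map (Int.castRingHom ℚ)) := by
      have := map_dvd (Polynomial.mapRingHom (Int.castRingHom ℚ)) hBZ
      simpa [Polynomial.map_mul, Polynomial.map_sub, Polynomial.map_pow, Polynomial.map_X,
        fpow_map] using this
    have hmapn : (pM m n).map (Int.castRingHom ℚ) =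
        X ^ (a 0) * (pM m (m 1 * n')).map (Int.castRingHom ℚ) := by
      rw [hnn', pM_add_lt m h1 n' (a 0) (ha 0 (by omega)), Polynomial.map_mul,
        Polynomial.map_pow, Polynomial.map_X]
    have hprodQ : ∏ j ∈ Finset.Icc 1 (k+1),
          (X:Polynomial ℚ) ^ (a j) * fpowQ (a j + 1) (m j - 1)
        = (X ^ (a 1) * fpowQ (a 1 + 1) (m 1 - 1)) *
          ∏ j ∈ Finset.Icc 1 k,
            (X:Polynomial ℚ) ^ (a (j+1)) * fpowQ (a (j+1) + 1) (m (j+1) - 1) := by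
      rw [← Finset.Ico_add_one_right_eq_Icc, Finset.prod_eq_prod_Ico_succ_bot (by omega)]
      congr 1
      rw [Finset.prod_Ico_eq_prod_range, ← Finset.Ico_add_one_right_eq_Icc, Finset.prod_Ico_eq_prod_range]
      apply Finset.prod_congr rfl
      intro i _
      have h2i : 2 + i = 1 + i + 1 := by omega
      rw [h2i]
    have hD1 := hG1.trans hB
    have hD2 := hGg'.trans hIH
    rw [hmapn, hprodQ]
    have hsplit2 : X ^ (a 0) * ((pM m (m 1 * n')).map (Int.castRingHom ℚ)) -
          X ^ (a 0) * ((X ^ (a 1) * fpowQ (a 1 + 1) (m 1 - 1)) *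
            ∏ j ∈ Finset.Icc 1 k,
              (X:Polynomial ℚ) ^ (a (j+1)) * fpowQ (a (j+1) + 1) (m (j+1) - 1))
        = X ^ (a 0) * ((pM m (m 1 * n')).map (Int.castRingHom ℚ) -
              X ^ (a 1) * fpowQ (a 1 + 1) (m 1 - 1) *
                (pM m' (n' - a 1)).map (Int.castRingHom ℚ)) +
          (X ^ (a 0) * (X ^ (a 1) * fpowQ (a 1 + 1) (m 1 - 1))) *
            ((pM m' (n' - a 1)).map (Int.castRingHom ℚ) -
              ∏ j ∈ Finset.Icc 1 k,
                (X:Polynomial ℚ) ^ (a (j+1)) * fpowQ (a (j+1) + 1) (m (j+1) - 1)) := by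
      ring
    rw [hsplit2]
    exact dvd_add (hD1.mul_left _) (hD2.mul_left _)

/-- If n = a₀ + a₁M₁ + ⋯ + a_k M_k is the M-ary representation of n, then
p_M(n,t) ≡ t^{a₀} ∏ t^{aⱼ} f(aⱼ+1, t^{mⱼ-1}) modulo
g_k(t) = gcd(t^{m₁+m₂-1}f(m₂,t^{m₁-1}), …, t^{m_k+m_{k+1}-1}f(m_{k+1},t^{m_k-1})). -/
theorem pM_characterisation_mod (m : ℕ → ℕ) (h0 : m 0 = 1) (hm : ∀ i ≥ 1, 2 ≤ m i)
    (n k : ℕ) (a : ℕ → ℕ) (ha : ∀ j ≤ k, a j < m (j + 1))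
    (hn : n = ∑ j ∈ Finset.range (k + 1), a j * ∏ i ∈ Finset.range (j + 1), m i) :
    (Finset.Icc 1 k).gcd
        (fun j => Polynomial.X ^ (m j + m (j + 1) - 1) * fpowQ (m (j + 1)) (m j - 1)) ∣
      ((pM m n).map (Int.castRingHom ℚ) -
        Polynomial.X ^ (a 0) *
          ∏ j ∈ Finset.Icc 1 k, Polynomial.X ^ (a j) * fpowQ (a j + 1) (m j - 1)) := by
  exact main_aux k m h0 hm n a ha hn
end
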